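/- Factorial ratio bound from the proof of Lemma 8.1 (inequality (10.9)). For all nonnegative integers l₁, l₂ with (l₁, l₂) ≠ (0,0), one has ((l₁ + l₂)!)² / ((2l₁)! (2l₂)!) ≤ exp( − (l₁ − l₂)² / (2 max(l₁, l₂)) ). -/

import Mathlib

open Finset

lemma prod_fact_aux (c a b : ℕ) (hab : a ≤ b) :
    (c + a).factorial * ∏ i ∈ Finset.Ico a b, (c + i + 1) = (c + b).factorial := by
  induction b, hab using Nat.le_induction with
  | base => simp
  | succ b hb ih =>
      rw [Finset.prod_Ico_succ_top hb, ← mul_assoc, ih]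
      rw [show c + (b + 1) = (c + b) + 1 by ring, Nat.factorial_succ]
      ring

lemma key_bound (k m : ℕ) (hk : k ≤ m) (hm : 0 < m) :
    (((m + k).factorial : ℝ)) ^ 2 / (((2 * m).factorial : ℝ) * ((2 * k).factorial : ℝ))
      ≤ Real.exp (-((m : ℝ) - k) ^ 2 / (2 * m)) := by
  have hA := prod_fact_aux k k m hk
  have hB := prod_fact_aux m k m hk
  rw [show k + k = 2 * k by ring] at hA
  rw [show m + m = 2 * m by ring] at hB
  have hApos : (0:ℝ) < ((2*k).factorial : ℝ) := by positivity
  have hBpos : (0:ℝ) < ((m+k).factorial : ℝ) := by positivity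
  have hPA : (0:ℝ) < ∏ i ∈ Finset.Ico k m, ((k+i+1 : ℕ) : ℝ) :=
    Finset.prod_pos fun i _ => by positivity
  have hPB : (0:ℝ) < ∏ i ∈ Finset.Ico k m, ((m+i+1 : ℕ) : ℝ) :=
    Finset.prod_pos fun i _ => by positivity
  have hA' : ((2*k).factorial : ℝ) * ∏ i ∈ Finset.Ico k m, ((k+i+1 : ℕ) : ℝ)
      = (((m+k).factorial : ℝ)) := by
    rw [add_comm m k]; exact_mod_cast hA
  have hB' : ((m+k).factorial : ℝ) * ∏ i ∈ Finset.Ico k m, ((m+i+1 : ℕ) : ℝ)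
      = (((2*m).factorial : ℝ)) := by
    exact_mod_cast hB
  have hEq : (((m + k).factorial : ℝ)) ^ 2 / (((2 * m).factorial : ℝ) * ((2 * k).factorial : ℝ))
      = ∏ i ∈ Finset.Ico k m, (((k + i + 1 : ℕ) : ℝ) / ((m + i + 1 : ℕ) : ℝ)) := by
    rw [Finset.prod_div_distrib, ← hB', ← hA']
    field_simp
  rw [hEq]
  have hstep : ∀ i ∈ Finset.Ico k m,
      (((k + i + 1 : ℕ) : ℝ) / ((m + i + 1 : ℕ) : ℝ)) ≤ Real.exp (-((m : ℝ) - k) / (2 * m)) := by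
    intro i hi
    rw [Finset.mem_Ico] at hi
    have him : i + 1 ≤ m := hi.2
    have hden : (0:ℝ) < ((m + i + 1 : ℕ) : ℝ) := by positivity
    have h1 : (((k + i + 1 : ℕ) : ℝ) / ((m + i + 1 : ℕ) : ℝ))
        = 1 + (-((m : ℝ) - k) / ((m + i + 1 : ℕ) : ℝ)) := by
      field_simp
      push_cast
      ring
    have h2 : (-((m : ℝ) - k) / ((m + i + 1 : ℕ) : ℝ)) + 1
        ≤ Real.exp (-((m : ℝ) - k) / ((m + i + 1 : ℕ) : ℝ)) := Real.add_one_le_exp _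
    have hkm : (k:ℝ) ≤ m := by exact_mod_cast hk
    have hi1 : (i:ℝ) + 1 ≤ m := by exact_mod_cast him
    have h3 : -((m : ℝ) - k) / ((m + i + 1 : ℕ) : ℝ) ≤ -((m : ℝ) - k) / (2 * m) := by
      rw [neg_div, neg_div, neg_le_neg_iff]
      gcongr
      · exact_mod_cast (by omega : m + i + 1 ≤ 2 * m)
    calc (((k + i + 1 : ℕ) : ℝ) / ((m + i + 1 : ℕ) : ℝ))
        = (-((m : ℝ) - k) / ((m + i + 1 : ℕ) : ℝ)) + 1 := by rw [h1]; ring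
      _ ≤ Real.exp (-((m : ℝ) - k) / ((m + i + 1 : ℕ) : ℝ)) := h2
      _ ≤ Real.exp (-((m : ℝ) - k) / (2 * m)) := Real.exp_le_exp.mpr h3
  have hprod := Finset.prod_le_prod (f := fun i => (((k + i + 1 : ℕ) : ℝ) / ((m + i + 1 : ℕ) : ℝ)))
    (g := fun _ => Real.exp (-((m : ℝ) - k) / (2 * m)))
    (fun i _ => by positivity) hstep
  refine hprod.trans_eq ?_
  rw [Finset.prod_const, Nat.card_Ico, ← Real.exp_nat_mul]
  congr 1
  have hmk : ((m - k : ℕ) : ℝ) = (m : ℝ) - k := Nat.cast_sub hk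
  rw [hmk]
  field_simp

theorem factorial_ratio_bound
    (l₁ l₂ : ℕ) (h : (l₁, l₂) ≠ (0, 0)) :
    (((l₁ + l₂).factorial : ℝ)) ^ 2 / (((2 * l₁).factorial : ℝ) * ((2 * l₂).factorial : ℝ))
      ≤ Real.exp (-((l₁ : ℝ) - (l₂ : ℝ)) ^ 2 / (2 * (max l₁ l₂ : ℕ))) := by
  rcases le_total l₂ l₁ with hle | hle
  · have hpos : 0 < l₁ := by
      rcases Nat.eq_zero_or_pos l₁ with h0 | h0
      · exfalso; apply h; simp [h0, Nat.le_zero.mp (h0 ▸ hle)]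
      · exact h0
    have := key_bound l₂ l₁ hle hpos
    rw [max_eq_left hle]
    exact this
  · have hpos : 0 < l₂ := by
      rcases Nat.eq_zero_or_pos l₂ with h0 | h0
      · exfalso; apply h; simp [h0, Nat.le_zero.mp (h0 ▸ hle)]
      · exact h0
    have := key_bound l₁ l₂ hle hpos
    rw [max_eq_right hle]
    rw [add_comm l₂ l₁] at this
    have hsq : ((l₂:ℝ) - l₁)^2 = ((l₁:ℝ) - l₂)^2 := by ring
    rw [hsq, mul_comm (((2*l₂).factorial : ℝ))] at this
    exact this
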